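/- Let h : (0,∞) → ℝ be a bounded measurable function such that h(t+l) − h(t) → 0 as t → ∞ for every l > 0. Then there exist translation invariant extended limits η₁ and η₂ such that η₁(h) = liminf_{t→∞} h(t) and η₂(h) = limsup_{t→∞} h(t). -/

import Mathlib

open MeasureTheory Filter Set Topology
open scoped ENNReal NNReal

/-- An *extended limit* (at `∞`). -/
structure ExtendedLimit where
  toFun : (ℝ → ℝ) →ₗ[ℝ] ℝ
  map_one : toFun 1 = 1
  mono : ∀ f g : ℝ → ℝ, (∀ᶠ t in atTop, f t ≤ g t) →
    (∃ M, ∀ᶠ t in atTop, |f t| ≤ M) → (∃ M, ∀ᶠ t in atTop, |g t| ≤ M) →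
    toFun f ≤ toFun g
  vanish : ∀ f : ℝ → ℝ, Tendsto f atTop (𝓝 (0:ℝ)) → toFun f = 0

/-- A function bounded on a neighbourhood of `∞`. -/
def BoundedNearInfty (f : ℝ → ℝ) : Prop := ∃ M, ∀ᶠ t in atTop, |f t| ≤ M

/-- Translation invariance: `ω (t ↦ f (t + l)) = ω f` for all `l > 0`. -/
def TransInvariant (ω : ExtendedLimit) : Prop :=
  ∀ f : ℝ → ℝ, BoundedNearInfty f → ∀ l : ℝ, 0 < l →
    ω.toFun (fun t => f (t + l)) = ω.toFun f

open scoped Pointwise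

noncomputable section StatementTen

namespace StatementTen

/-- Average of translates of `f` by `l 0, …, l (n-1)`. -/
def avgT (f : ℝ → ℝ) (n : ℕ) (l : ℕ → ℝ) : ℝ → ℝ :=
  fun t => (∑ i ∈ Finset.range n, f (t + l i)) / n

/-- The set of `limsup`s of averages of translates of `f`. -/
def pS (f : ℝ → ℝ) : Set ℝ :=
  {x | ∃ n : ℕ, ∃ l : ℕ → ℝ, 0 < n ∧ x = limsup (avgT f n l) atTop}

/-- The sublinear functional used in the Hahn–Banach construction. -/
def pF (f : ℝ → ℝ) : ℝ := sInf (pS f)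

lemma eventually_shift {P : ℝ → Prop} (hP : ∀ᶠ t in atTop, P t) (c : ℝ) :
    ∀ᶠ t in atTop, P (t + c) :=
  (tendsto_atTop_add_const_right atTop c tendsto_id).eventually hP

lemma avgT_bound {f : ℝ → ℝ} {M : ℝ} (hM : ∀ᶠ t in atTop, |f t| ≤ M)
    {n : ℕ} (hn : 0 < n) (l : ℕ → ℝ) :
    ∀ᶠ t in atTop, |avgT f n l t| ≤ M := by
  have H : ∀ᶠ t in atTop, ∀ i ∈ Finset.range n, |f (t + l i)| ≤ M :=
    (eventually_all_finset _).2 fun i _ => eventually_shift hM (l i)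
  filter_upwards [H] with t ht
  have hnR : (0:ℝ) < n := by exact_mod_cast hn
  rw [avgT, abs_div, abs_of_pos hnR, div_le_iff₀ hnR]
  calc |∑ i ∈ Finset.range n, f (t + l i)| ≤ ∑ i ∈ Finset.range n, |f (t + l i)| :=
        Finset.abs_sum_le_sum_abs _ _
    _ ≤ ∑ _i ∈ Finset.range n, M := Finset.sum_le_sum ht
    _ = M * n := by simp [Finset.sum_const, Finset.card_range, mul_comm]

lemma bddLe {f : ℝ → ℝ} {M : ℝ} (hM : ∀ᶠ t in atTop, |f t| ≤ M) :
    IsBoundedUnder (· ≤ ·) atTop f :=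
  isBoundedUnder_of_eventually_le (hM.mono fun t ht => (abs_le.1 ht).2)

lemma bddGe {f : ℝ → ℝ} {M : ℝ} (hM : ∀ᶠ t in atTop, |f t| ≤ M) :
    IsBoundedUnder (· ≥ ·) atTop f :=
  isBoundedUnder_of_eventually_ge (hM.mono fun t ht => (abs_le.1 ht).1)

lemma neg_le_limsup_of_bound {f : ℝ → ℝ} {M : ℝ} (hM : ∀ᶠ t in atTop, |f t| ≤ M) :
    -M ≤ limsup f atTop :=
  le_limsup_of_frequently_le ((hM.mono fun t ht => (abs_le.1 ht).1).frequently) (bddLe hM)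

lemma limsup_le_of_eventually_le {f : ℝ → ℝ} {M a : ℝ} (hM : ∀ᶠ t in atTop, |f t| ≤ M)
    (ha : ∀ᶠ t in atTop, f t ≤ a) : limsup f atTop ≤ a :=
  limsup_le_of_le (bddGe hM).isCoboundedUnder_le ha

lemma avgT_one_zero (f : ℝ → ℝ) : avgT f 1 (fun _ => 0) = f := by
  funext t; simp [avgT]

lemma limsup_mem_pS (f : ℝ → ℝ) : limsup f atTop ∈ pS f :=
  ⟨1, fun _ => 0, Nat.one_pos, by rw [avgT_one_zero]⟩

lemma pS_nonempty (f : ℝ → ℝ) : (pS f).Nonempty := ⟨_, limsup_mem_pS f⟩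

lemma pS_bddBelow {f : ℝ → ℝ} {M : ℝ} (hM : ∀ᶠ t in atTop, |f t| ≤ M) :
    BddBelow (pS f) := by
  refine ⟨-M, ?_⟩
  rintro x ⟨n, l, hn, rfl⟩
  exact neg_le_limsup_of_bound (avgT_bound hM hn l)

lemma pF_le_of_mem {f : ℝ → ℝ} {M : ℝ} (hM : ∀ᶠ t in atTop, |f t| ≤ M)
    {x : ℝ} (hx : x ∈ pS f) : pF f ≤ x :=
  csInf_le (pS_bddBelow hM) hx

lemma pF_le_limsup {f : ℝ → ℝ} {M : ℝ} (hM : ∀ᶠ t in atTop, |f t| ≤ M) :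
    pF f ≤ limsup f atTop := pF_le_of_mem hM (limsup_mem_pS f)

lemma limsup_const_mul_of_pos {u : ℝ → ℝ} {M c : ℝ} (hc : 0 < c)
    (hM : ∀ᶠ t in atTop, |u t| ≤ M) :
    limsup (fun t => c * u t) atTop = c * limsup u atTop := by
  have h1 : Monotone (fun x : ℝ => c * x) := monotone_mul_left_of_nonneg hc.le
  have h2 : ContinuousAt (fun x : ℝ => c * x) (limsup u atTop) :=
    (continuous_const.mul continuous_id).continuousAt
  exact (h1.map_limsup_of_continuousAt u h2 (bddLe hM) (bddGe hM).isCoboundedUnder_le).symm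

lemma limsup_add_le'' {u v : ℝ → ℝ} {Mu Mv : ℝ}
    (hu : ∀ᶠ t in atTop, |u t| ≤ Mu) (hv : ∀ᶠ t in atTop, |v t| ≤ Mv) :
    limsup (fun t => u t + v t) atTop ≤ limsup u atTop + limsup v atTop :=
  limsup_add_le (bddGe hu) (bddLe hu) (bddGe hv).isCoboundedUnder_le (bddLe hv)

lemma limsup_shift (u : ℝ → ℝ) (c : ℝ) :
    limsup (fun t => u (t + c)) atTop = limsup u atTop := by
  have h1 : (fun t => u (t + c)) = u ∘ (fun t : ℝ => t + c) := rfl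
  have h2 : (fun t : ℝ => t + c) = ⇑(OrderIso.addRight c) := by funext t; simp
  rw [h1, limsup_comp, h2, OrderIso.map_atTop]

lemma limsup_eq_of_tendsto_sub {u v : ℝ → ℝ} {M : ℝ}
    (hu : ∀ᶠ t in atTop, |u t| ≤ M)
    (hv : Tendsto (fun t => v t - u t) atTop (𝓝 0)) :
    limsup v atTop = limsup u atTop := by
  have he : ∀ᶠ t in atTop, |v t - u t| ≤ 1 := by
    filter_upwards [hv.eventually (eventually_abs_sub_lt 0 one_pos)] with t ht
    rw [sub_zero] at ht; exact ht.le
  have hvb : ∀ᶠ t in atTop, |v t| ≤ M + 1 := by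
    filter_upwards [hu, he] with t h1 h2
    calc |v t| = |u t + (v t - u t)| := by ring_nf
      _ ≤ |u t| + |v t - u t| := abs_add_le _ _
      _ ≤ M + 1 := add_le_add h1 h2
  have hz1 : limsup (fun t => v t - u t) atTop = 0 := hv.limsup_eq
  have hz2 : limsup (fun t => u t - v t) atTop = 0 := by
    have := hv.neg
    simp only [neg_sub, neg_zero] at this
    exact this.limsup_eq
  apply le_antisymm
  · have h3 : limsup v atTop ≤ limsup u atTop + limsup (fun t => v t - u t) atTop := by
      have hrw : (fun t => u t + (v t - u t)) = v := by funext t; ring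
      calc limsup v atTop = limsup (fun t => u t + (v t - u t)) atTop := by rw [hrw]
        _ ≤ _ := limsup_add_le'' hu he
    rwa [hz1, add_zero] at h3
  · have h3 : limsup u atTop ≤ limsup v atTop + limsup (fun t => u t - v t) atTop := by
      have hrw : (fun t => v t + (u t - v t)) = u := by funext t; ring
      have he' : ∀ᶠ t in atTop, |u t - v t| ≤ 1 := by
        filter_upwards [he] with t ht; rwa [abs_sub_comm]
      calc limsup u atTop = limsup (fun t => v t + (u t - v t)) atTop := by rw [hrw]
        _ ≤ _ := limsup_add_le'' hvb he'
    rwa [hz2, add_zero] at h3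

lemma avgT_zero (n : ℕ) (l : ℕ → ℝ) : avgT (0 : ℝ → ℝ) n l = fun _ => (0:ℝ) := by
  funext t; simp [avgT]

lemma pF_zero : pF (0 : ℝ → ℝ) = 0 := by
  have hset : pS (0 : ℝ → ℝ) = {0} := by
    ext x
    constructor
    · rintro ⟨n, l, hn, rfl⟩
      rw [avgT_zero, limsup_const]
      rfl
    · rintro rfl
      exact ⟨1, fun _ => 0, Nat.one_pos, by rw [avgT_zero]; rw [limsup_const]⟩
  rw [pF, hset, csInf_singleton]

lemma sum_mod_div {β : Type*} [AddCommMonoid β] (F : ℕ → ℕ → β) {n₁ : ℕ} (h₁ : 0 < n₁)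
    (n₂ : ℕ) :
    ∑ k ∈ Finset.range (n₁ * n₂), F (k % n₁) (k / n₁)
      = ∑ j ∈ Finset.range n₂, ∑ i ∈ Finset.range n₁, F i j := by
  induction n₂ with
  | zero => simp
  | succ m ih =>
    rw [Nat.mul_succ, Finset.sum_range_add, ih, Finset.sum_range_succ]
    congr 1
    refine Finset.sum_congr rfl fun i hi => ?_
    have hi' : i < n₁ := Finset.mem_range.1 hi
    rw [Nat.mul_add_mod, Nat.mod_eq_of_lt hi', Nat.mul_add_div h₁, Nat.div_eq_of_lt hi',
      Nat.add_zero]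

lemma avgT_comp (f : ℝ → ℝ) {n₁ n₂ : ℕ} (h₁ : 0 < n₁) (h₂ : 0 < n₂) (l₁ l₂ : ℕ → ℝ) :
    avgT f (n₁ * n₂) (fun k => l₁ (k % n₁) + l₂ (k / n₁)) = avgT (avgT f n₁ l₁) n₂ l₂ := by
  funext t
  have key : ∑ k ∈ Finset.range (n₁ * n₂), f (t + (l₁ (k % n₁) + l₂ (k / n₁)))
      = ∑ j ∈ Finset.range n₂, ∑ i ∈ Finset.range n₁, f (t + (l₁ i + l₂ j)) :=
    sum_mod_div (fun i j => f (t + (l₁ i + l₂ j))) h₁ n₂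
  have hinner : ∀ j, avgT f n₁ l₁ (t + l₂ j)
      = (∑ i ∈ Finset.range n₁, f (t + (l₁ i + l₂ j))) / n₁ := by
    intro j
    rw [avgT]
    congr 1
    exact Finset.sum_congr rfl fun i _ => congrArg f (by ring)
  rw [avgT, avgT, key]
  simp_rw [hinner]
  rw [← Finset.sum_div, div_div]
  congr 1
  push_cast
  ring

lemma avgT_comp' (f : ℝ → ℝ) {n₁ n₂ : ℕ} (h₁ : 0 < n₁) (h₂ : 0 < n₂) (l₁ l₂ : ℕ → ℝ) :
    avgT f (n₁ * n₂) (fun k => l₁ (k % n₁) + l₂ (k / n₁)) = avgT (avgT f n₂ l₂) n₁ l₁ := by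
  funext t
  have key : ∑ k ∈ Finset.range (n₁ * n₂), f (t + (l₁ (k % n₁) + l₂ (k / n₁)))
      = ∑ j ∈ Finset.range n₂, ∑ i ∈ Finset.range n₁, f (t + (l₁ i + l₂ j)) :=
    sum_mod_div (fun i j => f (t + (l₁ i + l₂ j))) h₁ n₂
  have hinner : ∀ i, avgT f n₂ l₂ (t + l₁ i)
      = (∑ j ∈ Finset.range n₂, f (t + (l₁ i + l₂ j))) / n₂ := by
    intro i
    rw [avgT]
    congr 1
    exact Finset.sum_congr rfl fun j _ => congrArg f (by ring)
  rw [avgT, avgT, key, Finset.sum_comm]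
  simp_rw [hinner]
  rw [← Finset.sum_div, div_div]
  congr 1
  push_cast
  ring

lemma limsup_avgT_le {G : ℝ → ℝ} {M : ℝ} (hG : ∀ᶠ t in atTop, |G t| ≤ M)
    {m : ℕ} (hm : 0 < m) (c : ℕ → ℝ) :
    limsup (avgT G m c) atTop ≤ limsup G atTop := by
  have hbs : ∀ s : Finset ℕ, ∀ᶠ t in atTop, |∑ i ∈ s, G (t + c i)| ≤ s.card * M := by
    intro s
    have H : ∀ᶠ t in atTop, ∀ i ∈ s, |G (t + c i)| ≤ M :=
      (eventually_all_finset _).2 fun i _ => eventually_shift hG (c i)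
    filter_upwards [H] with t ht
    calc |∑ i ∈ s, G (t + c i)| ≤ ∑ i ∈ s, |G (t + c i)| := Finset.abs_sum_le_sum_abs _ _
      _ ≤ ∑ _i ∈ s, M := Finset.sum_le_sum ht
      _ = s.card * M := by rw [Finset.sum_const, nsmul_eq_mul]
  have key : ∀ s : Finset ℕ,
      limsup (fun t => ∑ i ∈ s, G (t + c i)) atTop ≤ s.card * limsup G atTop := by
    intro s
    induction s using Finset.cons_induction with
    | empty => simp [limsup_const]
    | cons a s ha ih =>
      have hsplit : (fun t => ∑ i ∈ Finset.cons a s ha, G (t + c i))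
          = fun t => G (t + c a) + ∑ i ∈ s, G (t + c i) := by
        funext t; rw [Finset.sum_cons]
      rw [hsplit]
      calc limsup (fun t => G (t + c a) + ∑ i ∈ s, G (t + c i)) atTop
          ≤ limsup (fun t => G (t + c a)) atTop
            + limsup (fun t => ∑ i ∈ s, G (t + c i)) atTop :=
            limsup_add_le'' (eventually_shift hG (c a)) (hbs s)
        _ ≤ limsup G atTop + s.card * limsup G atTop := by
            rw [limsup_shift]; exact add_le_add_right ih _
        _ = (Finset.cons a s ha).card * limsup G atTop := by
            rw [Finset.card_cons]; push_cast; ring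
  have hmR : (0:ℝ) < m := by exact_mod_cast hm
  have hrw : avgT G m c = fun t => (1/(m:ℝ)) * ∑ i ∈ Finset.range m, G (t + c i) := by
    funext t; rw [avgT]; ring
  rw [hrw, limsup_const_mul_of_pos (by positivity) (hbs (Finset.range m))]
  have h1 := key (Finset.range m)
  rw [Finset.card_range] at h1
  calc (1/(m:ℝ)) * limsup (fun t => ∑ i ∈ Finset.range m, G (t + c i)) atTop
      ≤ (1/(m:ℝ)) * ((m:ℝ) * limsup G atTop) := by
        exact mul_le_mul_of_nonneg_left h1 (by positivity)
    _ = limsup G atTop := by field_simp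

lemma pF_add_le {f g : ℝ → ℝ} {Mf Mg : ℝ} (hf : ∀ᶠ t in atTop, |f t| ≤ Mf)
    (hg : ∀ᶠ t in atTop, |g t| ≤ Mg) :
    pF (f + g) ≤ pF f + pF g := by
  have hfg : ∀ᶠ t in atTop, |(f + g) t| ≤ Mf + Mg := by
    filter_upwards [hf, hg] with t h1 h2
    calc |(f + g) t| = |f t + g t| := rfl
      _ ≤ |f t| + |g t| := abs_add_le _ _
      _ ≤ Mf + Mg := add_le_add h1 h2
  have key : ∀ x₁ ∈ pS f, ∀ x₂ ∈ pS g, pF (f + g) ≤ x₁ + x₂ := by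
    rintro x₁ ⟨n₁, l₁, h₁, rfl⟩ x₂ ⟨n₂, l₂, h₂, rfl⟩
    set n := n₁ * n₂ with hn'
    set l : ℕ → ℝ := fun k => l₁ (k % n₁) + l₂ (k / n₁) with hl
    have hn : 0 < n := Nat.mul_pos h₁ h₂
    have step1 : pF (f + g) ≤ limsup (avgT (f + g) n l) atTop :=
      pF_le_of_mem hfg ⟨n, l, hn, rfl⟩
    have hsplit : avgT (f + g) n l = fun t => avgT f n l t + avgT g n l t := by
      funext t
      simp only [avgT, Pi.add_apply, Finset.sum_add_distrib, add_div]
    have step2 : limsup (avgT (f + g) n l) atTop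
        ≤ limsup (avgT f n l) atTop + limsup (avgT g n l) atTop := by
      rw [hsplit]
      exact limsup_add_le'' (avgT_bound hf hn l) (avgT_bound hg hn l)
    have step3 : limsup (avgT f n l) atTop ≤ limsup (avgT f n₁ l₁) atTop := by
      rw [hl, hn', avgT_comp f h₁ h₂ l₁ l₂]
      exact limsup_avgT_le (avgT_bound hf h₁ l₁) h₂ l₂
    have step4 : limsup (avgT g n l) atTop ≤ limsup (avgT g n₂ l₂) atTop := by
      rw [hl, hn', avgT_comp' g h₁ h₂ l₁ l₂]
      exact limsup_avgT_le (avgT_bound hg h₂ l₂) h₁ l₁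
    linarith
  have h1 : ∀ x₂ ∈ pS g, pF (f + g) - x₂ ≤ pF f := fun x₂ hx₂ =>
    le_csInf (pS_nonempty f) fun x₁ hx₁ => by linarith [key x₁ hx₁ x₂ hx₂]
  have h2 : pF (f + g) - pF f ≤ pF g :=
    le_csInf (pS_nonempty g) fun x₂ hx₂ => by linarith [h1 x₂ hx₂]
  linarith

lemma pF_smul {f : ℝ → ℝ} {M c : ℝ} (hc : 0 < c) (hM : ∀ᶠ t in atTop, |f t| ≤ M) :
    pF (c • f) = c * pF f := by
  have havg : ∀ (n : ℕ) (l : ℕ → ℝ), avgT (c • f) n l = fun t => c * avgT f n l t := by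
    intro n l
    funext t
    simp only [avgT, Pi.smul_apply, smul_eq_mul, ← Finset.mul_sum, mul_div_assoc]
  have hset : pS (c • f) = c • pS f := by
    ext x
    constructor
    · rintro ⟨n, l, hn, rfl⟩
      refine ⟨limsup (avgT f n l) atTop, ⟨n, l, hn, rfl⟩, ?_⟩
      show c • limsup (avgT f n l) atTop = limsup (avgT (c • f) n l) atTop
      rw [smul_eq_mul, ← limsup_const_mul_of_pos hc (avgT_bound hM hn l), ← havg n l]
    · rintro ⟨y, ⟨n, l, hn, rfl⟩, rfl⟩
      refine ⟨n, l, hn, ?_⟩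
      show c • limsup (avgT f n l) atTop = limsup (avgT (c • f) n l) atTop
      rw [smul_eq_mul, ← limsup_const_mul_of_pos hc (avgT_bound hM hn l), ← havg n l]
  rw [pF, hset, Real.sInf_smul_of_nonneg hc.le, smul_eq_mul, pF]

lemma limsup_le_pF_of_E {u : ℝ → ℝ} {M : ℝ} (hM : ∀ᶠ t in atTop, |u t| ≤ M)
    (hu : ∀ l : ℝ, Tendsto (fun t => u (t + l) - u t) atTop (𝓝 0)) :
    limsup u atTop ≤ pF u := by
  apply le_csInf (pS_nonempty u)
  rintro x ⟨n, l, hn, rfl⟩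
  have hn' : (n:ℝ) ≠ 0 := by positivity
  have hrw : (fun t => avgT u n l t - u t)
      = fun t => (∑ i ∈ Finset.range n, (u (t + l i) - u t)) / n := by
    funext t
    rw [avgT, Finset.sum_sub_distrib, sub_div, Finset.sum_const, Finset.card_range,
      nsmul_eq_mul, mul_div_cancel_left₀ _ hn']
  have hsum : Tendsto (fun t => ∑ i ∈ Finset.range n, (u (t + l i) - u t)) atTop (𝓝 0) := by
    have := tendsto_finset_sum (Finset.range n) (fun i (_ : i ∈ Finset.range n) => hu (l i))
    simpa using this
  have he : Tendsto (fun t => avgT u n l t - u t) atTop (𝓝 0) := by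
    rw [hrw]
    simpa using hsum.div_const (n:ℝ)
  exact (limsup_eq_of_tendsto_sub hM he).ge

lemma pF_translate_le {f : ℝ → ℝ} {M : ℝ} (hM : ∀ᶠ t in atTop, |f t| ≤ M) (l : ℝ) :
    pF (fun t => f (t + l) - f t) ≤ 0 := by
  set d : ℝ → ℝ := fun t => f (t + l) - f t with hd
  have hM0 : 0 ≤ M := by
    obtain ⟨t, ht⟩ := hM.exists
    exact (abs_nonneg _).trans ht
  have hdb : ∀ᶠ t in atTop, |d t| ≤ 2 * M := by
    filter_upwards [hM, eventually_shift hM l] with t h1 h2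
    calc |d t| ≤ |f (t + l)| + |f t| := abs_sub _ _
      _ ≤ M + M := add_le_add h2 h1
      _ = 2 * M := by ring
  have key : ∀ n : ℕ, 0 < n → pF d ≤ 2 * M / n := by
    intro n hn
    have hnR : (0:ℝ) < n := by exact_mod_cast hn
    set tup : ℕ → ℝ := fun i => ((i:ℝ) + 1) * l with htup
    have hsum : ∀ t, ∑ i ∈ Finset.range n, d (t + tup i)
        = f (t + ((n:ℝ) + 1) * l) - f (t + l) := by
      intro t
      have hterm : ∀ i, d (t + tup i)
          = (fun j : ℕ => f (t + ((j:ℝ) + 1) * l)) (i + 1)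
            - (fun j : ℕ => f (t + ((j:ℝ) + 1) * l)) i := by
        intro i
        simp only [hd, htup]
        congr 1
        · exact congrArg f (by push_cast; ring)
      rw [Finset.sum_congr rfl fun i _ => hterm i,
        Finset.sum_range_sub (fun j : ℕ => f (t + ((j:ℝ) + 1) * l)) n]
      norm_num
    have havg : ∀ᶠ t in atTop, |avgT d n tup t| ≤ 2 * M / n := by
      filter_upwards [eventually_shift hM (((n:ℝ) + 1) * l), eventually_shift hM l]
        with t h1 h2
      rw [avgT, hsum t, abs_div, abs_of_pos hnR, div_le_div_iff_of_pos_right hnR]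
      calc |f (t + ((n:ℝ) + 1) * l) - f (t + l)| ≤ |f (t + ((n:ℝ) + 1) * l)| + |f (t + l)| :=
            abs_sub _ _
        _ ≤ M + M := add_le_add h1 h2
        _ = 2 * M := by ring
    calc pF d ≤ limsup (avgT d n tup) atTop := pF_le_of_mem hdb ⟨n, tup, hn, rfl⟩
      _ ≤ 2 * M / n := limsup_le_of_eventually_le (avgT_bound hdb hn tup)
          (havg.mono fun t ht => (abs_le.1 ht).2)
  have hlim : Tendsto (fun n : ℕ => 2 * M / (n:ℝ)) atTop (𝓝 0) :=
    tendsto_const_div_atTop_nhds_zero_nat (2 * M)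
  have hev : ∀ᶠ n : ℕ in atTop, pF d ≤ 2 * M / (n:ℝ) := by
    filter_upwards [eventually_gt_atTop 0] with n hn
    exact key n hn
  exact ge_of_tendsto hlim hev

/-- The submodule of functions bounded near infinity. -/
def V : Submodule ℝ (ℝ → ℝ) where
  carrier := {f | BoundedNearInfty f}
  add_mem' := by
    rintro f g ⟨Mf, hMf⟩ ⟨Mg, hMg⟩
    refine ⟨Mf + Mg, ?_⟩
    filter_upwards [hMf, hMg] with t h1 h2
    calc |(f + g) t| = |f t + g t| := rfl
      _ ≤ |f t| + |g t| := abs_add_le _ _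
      _ ≤ Mf + Mg := add_le_add h1 h2
  zero_mem' := ⟨0, Eventually.of_forall fun t => by simp⟩
  smul_mem' := by
    rintro c f ⟨M, hM⟩
    refine ⟨|c| * M, ?_⟩
    filter_upwards [hM] with t ht
    calc |(c • f) t| = |c| * |f t| := by simp [abs_mul]
      _ ≤ |c| * M := mul_le_mul_of_nonneg_left ht (abs_nonneg c)

set_option maxHeartbeats 1000000 in
lemma main (h : ℝ → ℝ) (M : ℝ) (hM : ∀ᶠ t in atTop, |h t| ≤ M)
    (hE' : ∀ l : ℝ, Tendsto (fun t : ℝ => h (t + l) - h t) atTop (𝓝 (0:ℝ)))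
    (a : ℝ) (ha2 : a ≤ limsup h atTop)
    (ha1 : -a ≤ limsup (fun t => -h t) atTop) :
    ∃ η : ExtendedLimit, TransInvariant η ∧ η.toFun h = a := by
  classical
  have hMneg : ∀ᶠ t in atTop, |(-h) t| ≤ M := by
    filter_upwards [hM] with t ht
    simpa [abs_neg] using ht
  have hEneg : ∀ l : ℝ, Tendsto (fun t : ℝ => (-h) (t + l) - (-h) t) atTop (𝓝 (0:ℝ)) := by
    intro l
    have := (hE' l).neg
    simp only [neg_sub, neg_zero] at this
    have hrw : (fun t : ℝ => (-h) (t + l) - (-h) t) = fun t => h t - h (t + l) := by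
      funext t; simp [Pi.neg_apply]; ring
    rw [hrw]
    exact this
  -- the sublinear functional on V
  set N : ↥V → ℝ := fun x => pF x.val with hN
  have N_hom : ∀ c : ℝ, 0 < c → ∀ x : ↥V, N (c • x) = c * N x := by
    intro c hc x
    obtain ⟨Mx, hMx⟩ := x.2
    exact pF_smul hc hMx
  have N_add : ∀ x y : ↥V, N (x + y) ≤ N x + N y := by
    intro x y
    obtain ⟨Mx, hMx⟩ := x.2
    obtain ⟨My, hMy⟩ := y.2
    exact pF_add_le hMx hMy
  have hhV : h ∈ V := ⟨M, hM⟩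
  have hnegV : BoundedNearInfty (-h) := ⟨M, hMneg⟩
  have hpFh : limsup h atTop ≤ pF h := limsup_le_pF_of_E hM hE'
  have hpFnegh : limsup (-h) atTop ≤ pF (-h) := limsup_le_pF_of_E hMneg hEneg
  have hlimneg : limsup (fun t => -h t) atTop = limsup (-h) atTop := rfl
  -- construct the linear functional φ : V →ₗ ℝ with φ ≤ N and φ h = a
  have hφ : ∃ φ : ↥V →ₗ[ℝ] ℝ, (∀ x : ↥V, φ x ≤ N x) ∧ φ ⟨h, hhV⟩ = a := by
    by_cases hzero : (⟨h, hhV⟩ : ↥V) = 0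
    · obtain ⟨φ, _hext, hle⟩ := exists_extension_of_le_sublinear
        (⟨⊥, 0⟩ : (↥V) →ₗ.[ℝ] ℝ) N N_hom N_add (by
          rintro ⟨x, hx⟩
          have hx0 : x = 0 := by simpa using hx
          subst hx0
          simp only [LinearPMap.mk_apply, LinearMap.zero_apply]
          show (0:ℝ) ≤ pF (0 : ℝ → ℝ)
          rw [pF_zero])
      refine ⟨φ, hle, ?_⟩
      rw [hzero, map_zero]
      have hh0 : h = 0 := congrArg Subtype.val hzero
      rw [hh0] at ha2 ha1
      have hl0 : limsup (0 : ℝ → ℝ) atTop = 0 := by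
        have : (0 : ℝ → ℝ) = fun _ : ℝ => (0:ℝ) := rfl
        rw [this, limsup_const]
      have hl0' : limsup (fun t : ℝ => -(0 : ℝ → ℝ) t) atTop = 0 := by
        have : (fun t : ℝ => -(0 : ℝ → ℝ) t) = fun _ : ℝ => (0:ℝ) := by funext t; simp
        rw [this, limsup_const]
      rw [hl0] at ha2
      rw [hl0'] at ha1
      linarith
    · set hv : ↥V := ⟨h, hhV⟩ with hhv
      set e := LinearEquiv.coord ℝ (↥V) hv hzero with he
      set φ₀ : (ℝ ∙ hv) →ₗ[ℝ] ℝ := a • (e : (ℝ ∙ hv) →ₗ[ℝ] ℝ) with hφ₀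
      have hfle : ∀ x : ↥(ℝ ∙ hv), φ₀ x ≤ N x := by
        rintro x
        have hx : (e x) • hv = (x : ↥V) := LinearEquiv.coord_apply_smul ℝ (↥V) hv hzero x
        set c := e x with hc
        have hφ₀x : φ₀ x = a * c := by
          rw [hφ₀]
          simp [smul_eq_mul]
          exact Or.inl rfl
        have hxval : ((x : ↥V) : ℝ → ℝ) = c • h := by
          have h5 := congrArg (fun z : ↥V => (z : ℝ → ℝ)) hx
          simpa using h5.symm
        have hNx : N (x : ↥V) = pF (c • h) := by
          show pF ((x : ↥V) : ℝ → ℝ) = pF (c • h)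
          rw [hxval]
        rcases lt_trichotomy c 0 with hcneg | hc0 | hcpos
        · have hrw2 : c • h = (-c) • (-h) := by
            funext t; simp
          rw [hφ₀x, hNx, hrw2, pF_smul (by linarith : (0:ℝ) < -c) hMneg]
          have h1 : -a ≤ pF (-h) := le_trans (by rw [← hlimneg]; exact ha1) hpFnegh
          nlinarith
        · rw [hφ₀x, hNx, hc0]
          have : (0:ℝ) • h = (0 : ℝ → ℝ) := by funext t; simp
          rw [this, pF_zero]
          simp
        · rw [hφ₀x, hNx, pF_smul hcpos hM]
          have h1 : a ≤ pF h := le_trans ha2 hpFh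
          nlinarith
      obtain ⟨φ, hext, hle⟩ := exists_extension_of_le_sublinear
        (⟨ℝ ∙ hv, φ₀⟩ : (↥V) →ₗ.[ℝ] ℝ) N N_hom N_add hfle
      refine ⟨φ, hle, ?_⟩
      have hmem : hv ∈ ℝ ∙ hv := Submodule.mem_span_singleton_self hv
      have h1 := hext ⟨hv, hmem⟩
      have h2 : φ₀ ⟨hv, hmem⟩ = a := by
        rw [hφ₀]
        have : e ⟨hv, hmem⟩ = 1 := LinearEquiv.coord_self ℝ (↥V) hv hzero
        simp [this]
      calc φ hv = φ₀ ⟨hv, hmem⟩ := h1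
        _ = a := h2
  obtain ⟨φ, hle, hφh⟩ := hφ
  obtain ⟨C, hC⟩ := Submodule.exists_isCompl V
  set π : (ℝ → ℝ) →ₗ[ℝ] ↥V := Submodule.linearProjOfIsCompl V C hC with hπdef
  have hπ : ∀ (f : ℝ → ℝ) (hf : f ∈ V), π f = ⟨f, hf⟩ := fun f hf =>
    Submodule.linearProjOfIsCompl_apply_left hC ⟨f, hf⟩
  set L : (ℝ → ℝ) →ₗ[ℝ] ℝ := φ.comp π with hLdef
  have hLval : ∀ (f : ℝ → ℝ) (hf : f ∈ V), L f = φ ⟨f, hf⟩ := by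
    intro f hf
    rw [hLdef, LinearMap.comp_apply, hπ f hf]
  have hLle : ∀ (f : ℝ → ℝ) (hf : f ∈ V), L f ≤ pF f := by
    intro f hf
    rw [hLval f hf]
    exact hle ⟨f, hf⟩
  -- the four structure fields
  have hmap_one : L 1 = 1 := by
    have h1V : (1 : ℝ → ℝ) ∈ V := ⟨1, Eventually.of_forall fun t => by norm_num⟩
    have hb1 : ∀ᶠ t in atTop, |(1 : ℝ → ℝ) t| ≤ 1 := Eventually.of_forall fun t => by norm_num
    have hbn1 : ∀ᶠ t in atTop, |(-1 : ℝ → ℝ) t| ≤ 1 := Eventually.of_forall fun t => by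
      norm_num
    have hlc : limsup (1 : ℝ → ℝ) atTop = 1 := by
      have : (1 : ℝ → ℝ) = fun _ : ℝ => (1:ℝ) := rfl
      rw [this, limsup_const]
    have hlc' : limsup (-1 : ℝ → ℝ) atTop = -1 := by
      have : (-1 : ℝ → ℝ) = fun _ : ℝ => (-1:ℝ) := by funext t; simp
      rw [this, limsup_const]
    have l1 : L 1 ≤ 1 := (hLle 1 h1V).trans ((pF_le_limsup hb1).trans hlc.le)
    have l2 : L (-1) ≤ -1 := (hLle (-1) (neg_mem h1V)).trans ((pF_le_limsup hbn1).trans hlc'.le)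
    have l3 : L (-1) = -L 1 := map_neg L 1
    linarith
  have hmono : ∀ f g : ℝ → ℝ, (∀ᶠ t in atTop, f t ≤ g t) →
      (∃ Mc, ∀ᶠ t in atTop, |f t| ≤ Mc) → (∃ Mc, ∀ᶠ t in atTop, |g t| ≤ Mc) →
      L f ≤ L g := by
    rintro f g hfg ⟨Mf, hMf⟩ ⟨Mg, hMg⟩
    have hfV : f ∈ V := ⟨Mf, hMf⟩
    have hgV : g ∈ V := ⟨Mg, hMg⟩
    have hdV : -(g - f) ∈ V := neg_mem (sub_mem hgV hfV)
    have hbd : ∀ᶠ t in atTop, |(-(g - f)) t| ≤ Mg + Mf := by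
      filter_upwards [hMf, hMg] with t h1 h2
      have : (-(g - f)) t = f t - g t := by
        show -(g t - f t) = f t - g t
        ring
      rw [this]
      calc |f t - g t| ≤ |f t| + |g t| := abs_sub _ _
        _ ≤ Mf + Mg := add_le_add h1 h2
        _ = Mg + Mf := by ring
    have hev : ∀ᶠ t in atTop, (-(g - f)) t ≤ 0 := by
      filter_upwards [hfg] with t ht
      simp only [Pi.neg_apply, Pi.sub_apply]
      linarith
    have h1 : L (-(g - f)) ≤ 0 :=
      (hLle _ hdV).trans ((pF_le_limsup hbd).trans (limsup_le_of_eventually_le hbd hev))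
    have h2 : L (-(g - f)) = -(L g - L f) := by rw [map_neg, map_sub]
    linarith
  have hvanish : ∀ f : ℝ → ℝ, Tendsto f atTop (𝓝 (0:ℝ)) → L f = 0 := by
    intro f hf
    have hb : ∀ᶠ t in atTop, |f t| ≤ 1 := by
      filter_upwards [hf.eventually (eventually_abs_sub_lt 0 one_pos)] with t ht
      rw [sub_zero] at ht; exact ht.le
    have hbn : ∀ᶠ t in atTop, |(-f) t| ≤ 1 := by
      filter_upwards [hb] with t ht; simpa [abs_neg] using ht
    have hfV : f ∈ V := ⟨1, hb⟩
    have hl1 : limsup f atTop = 0 := hf.limsup_eq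
    have hfn : Tendsto (-f) atTop (𝓝 (0:ℝ)) := by
      rw [show (0:ℝ) = -0 by norm_num]
      exact hf.neg
    have hl2 : limsup (-f) atTop = 0 := hfn.limsup_eq
    have h1 : L f ≤ 0 := (hLle f hfV).trans ((pF_le_limsup hb).trans hl1.le)
    have h2 : L (-f) ≤ 0 := (hLle (-f) (neg_mem hfV)).trans ((pF_le_limsup hbn).trans hl2.le)
    have h3 : L (-f) = -L f := map_neg L f
    linarith
  refine ⟨⟨L, hmap_one, hmono, hvanish⟩, ?_, ?_⟩
  · -- translation invariance
    rintro f ⟨Mf, hMf⟩ l hl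
    have hfV : f ∈ V := ⟨Mf, hMf⟩
    have hflV : (fun t => f (t + l)) ∈ V := ⟨Mf, eventually_shift hMf l⟩
    set d : ℝ → ℝ := (fun t => f (t + l)) - f with hd
    have hdV : d ∈ V := sub_mem hflV hfV
    have hdeq : d = fun t => f (t + l) - f t := rfl
    have hMfneg : ∀ᶠ t in atTop, |(-f) t| ≤ Mf := by
      filter_upwards [hMf] with t ht; simpa [abs_neg] using ht
    have h1 : L d ≤ 0 := (hLle d hdV).trans (by rw [hdeq]; exact pF_translate_le hMf l)
    have hndeq : (-d) = fun t => (-f) (t + l) - (-f) t := by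
      funext t
      simp only [hd, Pi.neg_apply, Pi.sub_apply]
      ring
    have h2 : L (-d) ≤ 0 := (hLle (-d) (neg_mem hdV)).trans
      (by rw [hndeq]; exact pF_translate_le hMfneg l)
    have h3 : L (-d) = -L d := map_neg L d
    have h4 : L d = L (fun t => f (t + l)) - L f := by rw [hd, map_sub]
    show L (fun t => f (t + l)) = L f
    linarith
  · -- value at h
    show L h = a
    rw [hLval h hhV]
    exact hφh

end StatementTen

end StatementTen

/-- (Proposition 5.5.)  For every bounded measurable
`h : (0,∞) → ℝ` with `h(t+l) - h(t) → 0` at `∞` for every `l > 0` (i.e.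
`h ∈ E`), there are translation invariant extended limits `η₁, η₂` with
`η₁ h = liminf_{t→∞} h` and `η₂ h = limsup_{t→∞} h`. -/
theorem statement10
    (h : ℝ → ℝ) (hmeas : Measurable h)
    (hbdd : ∃ M : ℝ, ∀ t : ℝ, |h t| ≤ M)
    (hE : ∀ l : ℝ, 0 < l →
      Tendsto (fun t : ℝ => h (t + l) - h t) atTop (𝓝 (0:ℝ))) :
    ∃ η₁ η₂ : ExtendedLimit, TransInvariant η₁ ∧ TransInvariant η₂ ∧
      η₁.toFun h = Filter.liminf h Filter.atTop ∧
      η₂.toFun h = Filter.limsup h Filter.atTop := by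
  obtain ⟨M, hMall⟩ := hbdd
  have hM : ∀ᶠ t in atTop, |h t| ≤ M := Eventually.of_forall hMall
  have hE' : ∀ l : ℝ, Tendsto (fun t : ℝ => h (t + l) - h t) atTop (𝓝 (0:ℝ)) := by
    intro l
    rcases lt_trichotomy l 0 with hl | hl | hl
    · have hpos : 0 < -l := by linarith
      have hshift : Tendsto (fun t : ℝ => t + l) atTop atTop :=
        tendsto_atTop_add_const_right atTop l tendsto_id
      have key := (hE (-l) hpos).comp hshift
      have keyrw : ((fun s : ℝ => h (s + -l) - h s) ∘ fun t : ℝ => t + l)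
          = fun t : ℝ => h t - h (t + l) := by
        funext t
        simp [Function.comp, add_neg_cancel_right]
      rw [keyrw] at key
      have key2 := key.neg
      simp only [neg_sub, neg_zero] at key2
      exact key2
    · subst hl
      have : (fun t : ℝ => h (t + 0) - h t) = fun _ : ℝ => (0:ℝ) := by
        funext t; simp
      rw [this]
      exact tendsto_const_nhds
    · exact hE l hl
  have hMneg : ∀ᶠ t in atTop, |(fun t => -h t) t| ≤ M := by
    filter_upwards [hM] with t ht; simpa [abs_neg] using ht
  have hns : limsup (fun t => -h t) atTop = -liminf h atTop := by
    have ha : Antitone (fun x : ℝ => -x) := fun x y hxy => neg_le_neg hxy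
    have key := ha.map_limsup_of_continuousAt (F := atTop) (fun t => -h t)
      (continuous_neg.continuousAt) (StatementTen.bddLe hMneg)
      (StatementTen.bddGe hMneg).isCoboundedUnder_le
    have hcomp : ((fun x : ℝ => -x) ∘ fun t => -h t) = h := by funext t; simp
    rw [hcomp] at key
    linarith
  have hll : liminf h atTop ≤ limsup h atTop :=
    liminf_le_limsup (StatementTen.bddLe hM) (StatementTen.bddGe hM)
  obtain ⟨η₁, hi₁, he₁⟩ := StatementTen.main h M hM hE' (liminf h atTop) hll (by rw [hns])
  obtain ⟨η₂, hi₂, he₂⟩ := StatementTen.main h M hM hE' (limsup h atTop) le_rfl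
    (by rw [hns]; linarith)
  exact ⟨η₁, η₂, hi₁, hi₂, he₁, he₂⟩
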